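/- Let α be a strongly continuous one-parameter group of isometric automorphisms of a C*-algebra A, with generator δ. If b is a self-adjoint element of the domain of δ, then for all t ∈ ℝ, ‖α_t(e^{ib}) − e^{ib}‖ ≤ |t|·‖δ(b)‖. -/

import Mathlib

open NormedSpace Complex

/-- Norm bound for derivative argument: for selfadjoint `x y` in a C*-algebra,
`‖e^{ix} - e^{iy}‖ ≤ ‖x - y‖`. -/
lemma exp_smul_sub_exp_smul_norm_le
    {A : Type*} [NormedRing A] [StarRing A] [CStarRing A]
    [CompleteSpace A] [NormedAlgebra ℂ A] [StarModule ℂ A]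
    (x y : A) (hx : IsSelfAdjoint x) (hy : IsSelfAdjoint y) :
    ‖NormedSpace.exp (I • x) - NormedSpace.exp (I • y)‖ ≤ ‖x - y‖ := by
  have hexp : (NormedSpace.exp : A → A) = NormedSpace.exp := rfl
  set z : A := I • x with hz
  set w : A := I • y with hw
  -- unitarity of exponentials
  have hunit : ∀ (s : ℝ) (a : A), IsSelfAdjoint a → NormedSpace.exp (s • (I • a)) ∈ unitary A := by
    intro s a ha
    have h1 : s • (I • a) = I • (s • a) := smul_comm s I a
    have h2 : IsSelfAdjoint (s • a) := IsSelfAdjoint.smul (star_trivial s) ha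
    rw [hexp, h1]
    let +nondep : NormedAlgebra ℚ A := .restrictScalars ℚ ℂ A
    exact exp_mem_unitary_of_mem_skewAdjoint (h2.smul_mem_skewAdjoint conj_I)
  set g : ℝ → A := fun s => NormedSpace.exp (s • z) * NormedSpace.exp ((1 - s) • w) with hg
  have hderiv : ∀ s : ℝ,
      HasDerivAt g (NormedSpace.exp (s • z) * ((z - w) * NormedSpace.exp ((1 - s) • w))) s := by
    intro s
    have h1 : HasDerivAt (fun u : ℝ => NormedSpace.exp (u • z)) (NormedSpace.exp (s • z) * z) s :=
      hasDerivAt_exp_smul_const z s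
    have h2' : HasDerivAt (fun u : ℝ => NormedSpace.exp (u • w)) (NormedSpace.exp ((1 - s) • w) * w) (1 - s) :=
      hasDerivAt_exp_smul_const w (1 - s)
    have hlin : HasDerivAt (fun u : ℝ => 1 - u) (-1 : ℝ) s := by
      simpa using (hasDerivAt_id s).const_sub 1
    have h2 : HasDerivAt (fun u : ℝ => NormedSpace.exp ((1 - u) • w))
        ((-1 : ℝ) • (NormedSpace.exp ((1 - s) • w) * w)) s := h2'.scomp s hlin
    have h := h1.mul h2
    have hcomm : Commute w (NormedSpace.exp ((1 - s) • w)) :=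
      ((Commute.refl w).smul_right ((1 : ℝ) - s)).exp_right
    convert h using 1
    · rfl
    rw [neg_one_smul, mul_neg, ← sub_eq_add_neg, mul_assoc, ← hcomm.eq, sub_mul, mul_sub]
  have hbound : ∀ s : ℝ, ‖NormedSpace.exp (s • z) * ((z - w) * NormedSpace.exp ((1 - s) • w))‖ ≤ ‖x - y‖ := by
    intro s
    rw [CStarRing.norm_mem_unitary_mul _ (hunit s x hx),
      CStarRing.norm_mul_mem_unitary _ (hunit (1 - s) y hy)]
    have : z - w = I • (x - y) := by rw [hz, hw, smul_sub]
    rw [this, norm_smul, Complex.norm_I, one_mul]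
  have key : ‖g 1 - g 0‖ ≤ ‖x - y‖ * ‖(1 : ℝ) - 0‖ := by
    refine Convex.norm_image_sub_le_of_norm_hasDerivWithin_le
      (f := g) (f' := fun s => NormedSpace.exp (s • z) * ((z - w) * NormedSpace.exp ((1 - s) • w)))
      (C := ‖x - y‖) (s := Set.univ) ?_ ?_ convex_univ trivial trivial
    · intro s _; exact (hderiv s).hasDerivWithinAt
    · intro s _; exact hbound s
  have hg1 : g 1 = NormedSpace.exp z := by
    simp [hg, one_smul, NormedSpace.exp_zero]
  have hg0 : g 0 = NormedSpace.exp w := by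
    simp [hg, one_smul, NormedSpace.exp_zero]
  rw [← hexp]
  calc ‖NormedSpace.exp z - NormedSpace.exp w‖ = ‖g 1 - g 0‖ := by rw [hg1, hg0]
    _ ≤ ‖x - y‖ * ‖(1 : ℝ) - 0‖ := key
    _ = ‖x - y‖ := by norm_num

/-- If `α` is a strongly continuous one-parameter group of isometric
automorphisms of a C*-algebra `A` with generator `δ` (so that
`α_t x - x = ∫₀ᵗ α_s (δ x) ds` for `x` in the domain of `δ`), and `b` is a self-adjoint
element of the domain of `δ`, then `‖α_t (e^{ib}) - e^{ib}‖ ≤ |t| ⬝ ‖δ b‖` for all `t`. -/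
theorem quasifree_exp_estimate
    {A : Type*} [NormedRing A] [StarRing A] [CStarRing A]
    [CompleteSpace A] [NormedAlgebra ℂ A] [StarModule ℂ A]
    (α : ℝ → A ≃⋆ₐ[ℂ] A)
    (hgroup : ∀ s t : ℝ, ∀ x : A, α (s + t) x = α s (α t x))
    (hcont : ∀ x : A, Continuous fun t : ℝ => α t x)
    (hiso : ∀ (t : ℝ) (x : A), ‖α t x‖ = ‖x‖)
    (Dδ : Set A) (δ : A → A)
    (hgen : ∀ x ∈ Dδ, ∀ t : ℝ, α t x - x = ∫ s in (0:ℝ)..t, α s (δ x))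
    (b : A) (hb : b ∈ Dδ) (hbsa : IsSelfAdjoint b) :
    ∀ t : ℝ, ‖α t (NormedSpace.exp (Complex.I • b)) - NormedSpace.exp (Complex.I • b)‖
      ≤ |t| * ‖δ b‖ := by
  intro t
  -- α t is continuous
  have hcontt : Continuous (α t) :=
    (AddMonoidHomClass.isometry_of_norm (α t) (hiso t)).continuous
  -- α t maps the exponential
  have hmape : α t (NormedSpace.exp (I • b)) = NormedSpace.exp (I • α t b) := by
    let +nondep : NormedAlgebra ℚ A := .restrictScalars ℚ ℂ A
    rw [map_exp (α t) hcontt, map_smul]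
  -- α t b is selfadjoint
  have hsa : IsSelfAdjoint (α t b) := by
    rw [IsSelfAdjoint, ← map_star (α t) b, hbsa.star_eq]
  -- bound on ‖α t b - b‖
  have hb1 : ‖α t b - b‖ ≤ |t| * ‖δ b‖ := by
    rw [hgen b hb t]
    have := intervalIntegral.norm_integral_le_of_norm_le_const
      (f := fun s => α s (δ b)) (a := 0) (b := t) (C := ‖δ b‖)
      (fun s _ => le_of_eq (hiso s (δ b)))
    simpa [mul_comm] using this
  calc ‖α t (NormedSpace.exp (I • b)) - NormedSpace.exp (I • b)‖
      = ‖NormedSpace.exp (I • α t b) - NormedSpace.exp (I • b)‖ := by rw [hmape]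
    _ ≤ ‖α t b - b‖ := exp_smul_sub_exp_smul_norm_le _ _ hsa hbsa
    _ ≤ |t| * ‖δ b‖ := hb1
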